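/- arXiv:1406.5698 — 3 statements merged into one kernel-verified Lean document; each statement's English description precedes it below -/
import Mathlib

section
/- Let 𝔤 be the 4-dimensional real Lie algebra e(2) ⊕ ℝ with basis e₁, e₂, e₃, e₄ and nonzero brackets [e₁,e₃] = e₂, [e₂,e₃] = −e₁ (all other brackets of basis elements are zero). An alternating ℝ-bilinear form F : 𝔤 × 𝔤 → ℝ is a 2-cocycle of 𝔤 if and only if F(e₁,e₄) = 0 and F(e₂,e₄) = 0; equivalently, if and only if F = μ₁ e¹∧e² + μ₂ e³∧e⁴ + μ₃ e¹∧e³ + μ₄ e²∧e³ where μ₁ = F(e₁,e₂), μ₂ = F(e₃,e₄), μ₃ = F(e₁,e₃), μ₄ = F(e₂,e₃) and {eᵃ} is the dual basis. -/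
noncomputable section

/-- The Lie bracket of the Lie algebra `e(2) ⊕ ℝ` on `ℝ⁴`, in the basis
`e₁ = e 0, e₂ = e 1, e₃ = e 2, e₄ = e 3` with nonzero brackets
`[e₁,e₃] = e₂`, `[e₂,e₃] = -e₁`. -/
def bra (x y : Fin 4 → ℝ) : Fin 4 → ℝ :=
  ![-(x 1 * y 2 - x 2 * y 1), x 0 * y 2 - x 2 * y 0, 0, 0]

/-- The standard basis `e₁, e₂, e₃, e₄` (indexed from `0`). -/
def e (a : Fin 4) : Fin 4 → ℝ := Pi.single a 1

/-- `F` is a 2-cocycle of `e(2) ⊕ ℝ` with values in `ℝ`. -/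
def IsCocycle (F : (Fin 4 → ℝ) →ₗ[ℝ] (Fin 4 → ℝ) →ₗ[ℝ] ℝ) : Prop :=
  ∀ x y z : Fin 4 → ℝ, F (bra x y) z + F (bra y z) x + F (bra z x) y = 0

/-- an alternating bilinear form `F` on `e(2) ⊕ ℝ` is a 2-cocycle iff
`F(e₁,e₄) = 0` and `F(e₂,e₄) = 0`; equivalently, iff
`F = μ₁ e¹∧e² + μ₂ e³∧e⁴ + μ₃ e¹∧e³ + μ₄ e²∧e³` with
`μ₁ = F(e₁,e₂)`, `μ₂ = F(e₃,e₄)`, `μ₃ = F(e₁,e₃)`, `μ₄ = F(e₂,e₃)`. -/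
theorem two_cocycles_of_e2_plus_R
    (F : (Fin 4 → ℝ) →ₗ[ℝ] (Fin 4 → ℝ) →ₗ[ℝ] ℝ)
    (hFalt : ∀ x : Fin 4 → ℝ, F x x = 0) :
    (IsCocycle F ↔ (F (e 0) (e 3) = 0 ∧ F (e 1) (e 3) = 0)) ∧
    (IsCocycle F ↔ ∀ x y : Fin 4 → ℝ,
        F x y = F (e 0) (e 1) * (x 0 * y 1 - x 1 * y 0)
              + F (e 2) (e 3) * (x 2 * y 3 - x 3 * y 2)
              + F (e 0) (e 2) * (x 0 * y 2 - x 2 * y 0)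
              + F (e 1) (e 2) * (x 1 * y 2 - x 2 * y 1)) := by
  have hd : ∀ x : Fin 4 → ℝ, x = x 0 • e 0 + x 1 • e 1 + x 2 • e 2 + x 3 • e 3 := by
    intro x
    funext i
    fin_cases i <;> simp [e, Pi.single_apply]
  have hexp : ∀ x y : Fin 4 → ℝ, F x y =
      x 0 * y 0 * F (e 0) (e 0) + x 0 * y 1 * F (e 0) (e 1) +
      x 0 * y 2 * F (e 0) (e 2) + x 0 * y 3 * F (e 0) (e 3) +
      x 1 * y 0 * F (e 1) (e 0) + x 1 * y 1 * F (e 1) (e 1) +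
      x 1 * y 2 * F (e 1) (e 2) + x 1 * y 3 * F (e 1) (e 3) +
      x 2 * y 0 * F (e 2) (e 0) + x 2 * y 1 * F (e 2) (e 1) +
      x 2 * y 2 * F (e 2) (e 2) + x 2 * y 3 * F (e 2) (e 3) +
      x 3 * y 0 * F (e 3) (e 0) + x 3 * y 1 * F (e 3) (e 1) +
      x 3 * y 2 * F (e 3) (e 2) + x 3 * y 3 * F (e 3) (e 3) := by
    intro x y
    nth_rewrite 1 [hd x]
    nth_rewrite 1 [hd y]
    simp only [map_add, map_smul, LinearMap.add_apply, LinearMap.smul_apply, smul_eq_mul]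
    ring
  have hskew : ∀ x y : Fin 4 → ℝ, F y x = - F x y := by
    intro x y
    have h := hFalt (x + y)
    simp [map_add, hFalt] at h
    linarith
  have hbra : ∀ x y : Fin 4 → ℝ, (bra x y) 0 = -(x 1 * y 2 - x 2 * y 1) ∧
      (bra x y) 1 = x 0 * y 2 - x 2 * y 0 ∧ (bra x y) 2 = 0 ∧ (bra x y) 3 = 0 := by
    intro x y; refine ⟨rfl, rfl, rfl, rfl⟩
  have key : (F (e 0) (e 3) = 0 ∧ F (e 1) (e 3) = 0) → IsCocycle F := by
    rintro ⟨h03, h13⟩ x y z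
    rw [hexp (bra x y) z, hexp (bra y z) x, hexp (bra z x) y]
    obtain ⟨a1, a2, a3, a4⟩ := hbra x y
    obtain ⟨b1, b2, b3, b4⟩ := hbra y z
    obtain ⟨c1, c2, c3, c4⟩ := hbra z x
    rw [a1, a2, a3, a4, b1, b2, b3, b4, c1, c2, c3, c4,
      hskew (e 0) (e 1), hskew (e 0) (e 2), hskew (e 0) (e 3),
      hskew (e 1) (e 2), hskew (e 1) (e 3), hskew (e 2) (e 3),
      hFalt (e 0), hFalt (e 1), hFalt (e 2), hFalt (e 3), h03, h13]
    ring
  have fwd : IsCocycle F → (F (e 0) (e 3) = 0 ∧ F (e 1) (e 3) = 0) := by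
    intro hc
    constructor
    · have h := hc (e 1) (e 2) (e 3)
      have h1 : bra (e 1) (e 2) = (-1 : ℝ) • e 0 := by
        funext i; fin_cases i <;> simp [bra, e, Pi.single_apply]
      have h2 : bra (e 2) (e 3) = 0 := by
        funext i; fin_cases i <;> simp [bra, e, Pi.single_apply]
      have h3 : bra (e 3) (e 1) = 0 := by
        funext i; fin_cases i <;> simp [bra, e, Pi.single_apply]
      rw [h1, h2, h3] at h
      simp at h
      linarith
    · have h := hc (e 0) (e 2) (e 3)
      have h1 : bra (e 0) (e 2) = e 1 := by
        funext i; fin_cases i <;> simp [bra, e, Pi.single_apply]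
      have h2 : bra (e 2) (e 3) = 0 := by
        funext i; fin_cases i <;> simp [bra, e, Pi.single_apply]
      have h3 : bra (e 3) (e 0) = 0 := by
        funext i; fin_cases i <;> simp [bra, e, Pi.single_apply]
      rw [h1, h2, h3] at h
      simp at h
      exact h
  have iff1 : IsCocycle F ↔ (F (e 0) (e 3) = 0 ∧ F (e 1) (e 3) = 0) := ⟨fwd, key⟩
  refine ⟨iff1, ?_⟩
  rw [iff1]
  constructor
  · rintro ⟨h03, h13⟩ x y
    rw [hexp x y, hskew (e 0) (e 1), hskew (e 0) (e 2), hskew (e 0) (e 3),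
      hskew (e 1) (e 2), hskew (e 1) (e 3), hskew (e 2) (e 3),
      hFalt (e 0), hFalt (e 1), hFalt (e 2), hFalt (e 3), h03, h13]
    ring
  · intro h
    constructor
    · have := h (e 0) (e 3)
      simpa [e, Pi.single_apply] using this
    · have := h (e 1) (e 3)
      simpa [e, Pi.single_apply] using this
end
end

section
/- Let 𝔤 be the 4-dimensional real Lie algebra e(2) ⊕ ℝ with basis e₁, e₂, e₃, e₄ and nonzero brackets [e₁,e₃] = e₂, [e₂,e₃] = −e₁. A 2-cocycle F of 𝔤 is a 2-coboundary (i.e. there exists a linear functional λ ∈ 𝔤* with F(x,y) = λ([x,y]) for all x, y) if and only if F(e₁,e₂) = 0 and F(e₃,e₄) = 0. -/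
noncomputable section

lemma e_val (a i : Fin 4) : e a i = if i = a then 1 else 0 := by
  simp [e, Pi.single_apply]

lemma decomp (v : Fin 4 → ℝ) : v = v 0 • e 0 + v 1 • e 1 + v 2 • e 2 + v 3 • e 3 := by
  funext i
  fin_cases i <;> simp [e_val]

lemma bra02 : bra (e 0) (e 2) = e 1 := by
  funext i; fin_cases i <;> simp [bra, e_val]

lemma bra12 : bra (e 1) (e 2) = -(e 0) := by
  funext i; fin_cases i <;> simp [bra, e_val]

lemma bra23 : bra (e 2) (e 3) = 0 := by
  funext i; fin_cases i <;> simp [bra, e_val]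

lemma bra30 : bra (e 3) (e 0) = 0 := by
  funext i; fin_cases i <;> simp [bra, e_val]

lemma bra31 : bra (e 3) (e 1) = 0 := by
  funext i; fin_cases i <;> simp [bra, e_val]

lemma bra01 : bra (e 0) (e 1) = 0 := by
  funext i; fin_cases i <;> simp [bra, e_val]

/-- a 2-cocycle `F` of `e(2) ⊕ ℝ` is a 2-coboundary (i.e. of the form
`F(x,y) = λ([x,y])` for a linear functional `λ`) iff `F(e₁,e₂) = 0` and `F(e₃,e₄) = 0`. -/
theorem two_coboundary_iff
    (F : (Fin 4 → ℝ) →ₗ[ℝ] (Fin 4 → ℝ) →ₗ[ℝ] ℝ)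
    (hFalt : ∀ x : Fin 4 → ℝ, F x x = 0) (hF : IsCocycle F) :
    (∃ lam : (Fin 4 → ℝ) →ₗ[ℝ] ℝ, ∀ x y : Fin 4 → ℝ, F x y = lam (bra x y)) ↔
      (F (e 0) (e 1) = 0 ∧ F (e 2) (e 3) = 0) := by
  have hskew : ∀ x y : Fin 4 → ℝ, F y x = -F x y := by
    intro x y
    have h := hFalt (x + y)
    simp only [map_add, LinearMap.add_apply, hFalt] at h
    linarith
  constructor
  · rintro ⟨lam, hlam⟩
    constructor
    · rw [hlam, bra01, map_zero]
    · rw [hlam, bra23, map_zero]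
  · rintro ⟨h01, h23⟩
    -- derive F e1 e3 = 0 from the cocycle condition on (e0, e2, e3)
    have h13 : F (e 1) (e 3) = 0 := by
      have h := hF (e 0) (e 2) (e 3)
      rw [bra02, bra23, bra30] at h
      simpa using h
    -- derive F e0 e3 = 0 from the cocycle condition on (e1, e2, e3)
    have h03 : F (e 0) (e 3) = 0 := by
      have h := hF (e 1) (e 2) (e 3)
      rw [bra12, bra23, bra31] at h
      simp only [map_zero, map_neg, LinearMap.zero_apply, LinearMap.neg_apply, add_zero,
        zero_add] at h
      linarith
    refine ⟨(-(F (e 1) (e 2))) • LinearMap.proj 0 + (F (e 0) (e 2)) • LinearMap.proj 1, ?_⟩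
    intro x y
    have hx := decomp x
    have hy := decomp y
    conv_lhs => rw [hx, hy]
    simp only [map_add, map_smul, LinearMap.add_apply, LinearMap.smul_apply,
      LinearMap.proj_apply, smul_eq_mul, bra]
    simp only [hFalt, hskew (e 0) (e 1), hskew (e 0) (e 2), hskew (e 0) (e 3),
      hskew (e 1) (e 2), hskew (e 1) (e 3), hskew (e 2) (e 3)]
    simp only [Matrix.cons_val_zero, Matrix.cons_val_one, Matrix.head_cons]
    rw [h01, h23, h13, h03]
    ring
end
end

section
/- Let 𝔤 be the 4-dimensional real Lie algebra e(2) ⊕ ℝ with basis e₁, e₂, e₃, e₄ and nonzero brackets [e₁,e₃] = e₂, [e₂,e₃] = −e₁, and let F be a 2-cocycle of 𝔤. Then F is nondegenerate (i.e. the only v ∈ 𝔤 with F(v,w) = 0 for all w ∈ 𝔤 is v = 0) if and only if F(e₁,e₂) · F(e₃,e₄) ≠ 0. In particular, since adding a 2-coboundary changes neither F(e₁,e₂) nor F(e₃,e₄), every 2-cocycle cohomologous to F is nondegenerate whenever F(e₁,e₂) · F(e₃,e₄) ≠ 0. -/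
noncomputable section

lemma skew (F : (Fin 4 → ℝ) →ₗ[ℝ] (Fin 4 → ℝ) →ₗ[ℝ] ℝ)
    (hFalt : ∀ x : Fin 4 → ℝ, F x x = 0) (x y : Fin 4 → ℝ) : F y x = - F x y := by
  have h := hFalt (x + y)
  simp only [map_add, LinearMap.add_apply, hFalt x, hFalt y] at h
  linarith

lemma Fv (F : (Fin 4 → ℝ) →ₗ[ℝ] (Fin 4 → ℝ) →ₗ[ℝ] ℝ) (v w : Fin 4 → ℝ) :
    F v w = v 0 * F (e 0) w + v 1 * F (e 1) w + v 2 * F (e 2) w + v 3 * F (e 3) w := by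
  conv_lhs => rw [decomp v]
  simp [map_add, map_smul, LinearMap.add_apply, LinearMap.smul_apply, smul_eq_mul]

lemma h13 (F : (Fin 4 → ℝ) →ₗ[ℝ] (Fin 4 → ℝ) →ₗ[ℝ] ℝ) (hF : IsCocycle F) :
    F (e 1) (e 3) = 0 := by
  have h := hF (e 0) (e 2) (e 3)
  rw [bra02, bra23, bra30] at h
  simpa using h

lemma h03 (F : (Fin 4 → ℝ) →ₗ[ℝ] (Fin 4 → ℝ) →ₗ[ℝ] ℝ) (hF : IsCocycle F) :
    F (e 0) (e 3) = 0 := by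
  have h := hF (e 1) (e 2) (e 3)
  rw [bra12, bra23, bra31] at h
  simp only [map_neg, LinearMap.neg_apply, map_zero, LinearMap.zero_apply, add_zero] at h
  linarith

lemma e_ne_zero (a : Fin 4) : e a ≠ 0 := by
  intro h
  have := congrFun h a
  simp [e] at this

lemma main (F : (Fin 4 → ℝ) →ₗ[ℝ] (Fin 4 → ℝ) →ₗ[ℝ] ℝ)
    (hFalt : ∀ x : Fin 4 → ℝ, F x x = 0) (hF : IsCocycle F) :
    (∀ v : Fin 4 → ℝ, (∀ w : Fin 4 → ℝ, F v w = 0) → v = 0) ↔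
      F (e 0) (e 1) * F (e 2) (e 3) ≠ 0 := by
  set a := F (e 0) (e 1) with ha
  set b := F (e 0) (e 2) with hb
  set c := F (e 1) (e 2) with hc
  set d := F (e 2) (e 3) with hd
  have k03 := h03 F hF
  have k13 := h13 F hF
  -- table of values F (e i) (e j)
  have t10 : F (e 1) (e 0) = -a := skew F hFalt _ _
  have t20 : F (e 2) (e 0) = -b := skew F hFalt _ _
  have t21 : F (e 2) (e 1) = -c := skew F hFalt _ _
  have t32 : F (e 3) (e 2) = -d := skew F hFalt _ _
  have t30 : F (e 3) (e 0) = -F (e 0) (e 3) := skew F hFalt _ _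
  have t31 : F (e 3) (e 1) = -F (e 1) (e 3) := skew F hFalt _ _
  rw [k03] at t30; rw [k13] at t31
  simp only [neg_zero] at t30 t31
  constructor
  · intro hnd
    intro had
    rcases mul_eq_zero.mp had with hA | hD
    · by_cases hB : b = 0
      · -- e 0 is in the kernel
        have : e 0 = 0 := by
          apply hnd
          intro w
          rw [skew F hFalt w (e 0), Fv F w (e 0), t10, t20, t30, hFalt]
          rw [hA, hB]; ring
        exact e_ne_zero 0 this
      · -- c • e 0 - b • e 1 is in the kernel
        set v : Fin 4 → ℝ := c • e 0 - b • e 1 with hv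
        have hker : ∀ w, F v w = 0 := by
          intro w
          have hexp : F v w = c * F (e 0) w - b * F (e 1) w := by
            rw [hv]; simp [map_sub, map_smul, LinearMap.sub_apply, LinearMap.smul_apply,
              smul_eq_mul]
          rw [hexp, skew F hFalt w (e 0), skew F hFalt w (e 1),
            Fv F w (e 0), Fv F w (e 1), t10, t20, t21, t30, t31, hFalt, hFalt]
          rw [← ha, hA]; ring
        have hv0 : v = 0 := hnd v hker
        have := congrFun hv0 1
        simp [hv, e, Pi.single_apply] at this
        exact hB this
    · -- e 3 is in the kernel
      have : e 3 = 0 := by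
        apply hnd
        intro w
        rw [skew F hFalt w (e 3), Fv F w (e 3), k03, k13, hFalt, ← hd]
        rw [hD]; ring
      exact e_ne_zero 3 this
  · intro had v hker
    have hA : a ≠ 0 := left_ne_zero_of_mul had
    have hD : d ≠ 0 := right_ne_zero_of_mul had
    have eq0 := hker (e 0); have eq1 := hker (e 1)
    have eq2 := hker (e 2); have eq3 := hker (e 3)
    rw [Fv F v (e 0), t10, t20, t30, hFalt] at eq0
    rw [Fv F v (e 1), t21, t31, hFalt, ← ha] at eq1
    rw [Fv F v (e 2), t32, hFalt, ← hb, ← hc] at eq2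
    rw [Fv F v (e 3), k03, k13, hFalt, ← hd] at eq3
    have hv2 : v 2 = 0 := by
      have : v 2 * d = 0 := by linarith
      exact (mul_eq_zero.mp this).resolve_right hD
    have hv1 : v 1 = 0 := by
      have : a * v 1 = 0 := by rw [hv2] at eq0; linarith
      exact (mul_eq_zero.mp this).resolve_left hA
    have hv0 : v 0 = 0 := by
      have : a * v 0 = 0 := by rw [hv2] at eq1; linarith
      exact (mul_eq_zero.mp this).resolve_left hA
    have hv3 : v 3 = 0 := by
      have : d * v 3 = 0 := by rw [hv0, hv1] at eq2; linarith
      exact (mul_eq_zero.mp this).resolve_left hD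
    funext i
    fin_cases i <;> simp [hv0, hv1, hv2, hv3]

/-- a 2-cocycle `F` of `e(2) ⊕ ℝ` is nondegenerate iff
`F(e₁,e₂) · F(e₃,e₄) ≠ 0`; in particular, in this case every 2-cocycle
cohomologous to `F` is nondegenerate. -/
theorem cocycle_nondegenerate_iff
    (F : (Fin 4 → ℝ) →ₗ[ℝ] (Fin 4 → ℝ) →ₗ[ℝ] ℝ)
    (hFalt : ∀ x : Fin 4 → ℝ, F x x = 0) (hF : IsCocycle F) :
    ((∀ v : Fin 4 → ℝ, (∀ w : Fin 4 → ℝ, F v w = 0) → v = 0) ↔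
        F (e 0) (e 1) * F (e 2) (e 3) ≠ 0) ∧
    (F (e 0) (e 1) * F (e 2) (e 3) ≠ 0 →
      ∀ G : (Fin 4 → ℝ) →ₗ[ℝ] (Fin 4 → ℝ) →ₗ[ℝ] ℝ,
        (∀ x : Fin 4 → ℝ, G x x = 0) → IsCocycle G →
        (∃ lam : (Fin 4 → ℝ) →ₗ[ℝ] ℝ, ∀ x y : Fin 4 → ℝ, G x y - F x y = lam (bra x y)) →
        ∀ v : Fin 4 → ℝ, (∀ w : Fin 4 → ℝ, G v w = 0) → v = 0) := by
  refine ⟨main F hFalt hF, ?_⟩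
  intro had G hGalt hG ⟨lam, hlam⟩
  have h01 : G (e 0) (e 1) = F (e 0) (e 1) := by
    have := hlam (e 0) (e 1)
    rw [bra01] at this
    simp at this
    linarith
  have h23 : G (e 2) (e 3) = F (e 2) (e 3) := by
    have := hlam (e 2) (e 3)
    rw [bra23] at this
    simp at this
    linarith
  exact (main G hGalt hG).mpr (by rw [h01, h23]; exact had)
end
end
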